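/- Let Γ ≤ ℍ^× be a finite subgroup with |Γ| = m and let n ≥ 1. For W = W_n(Γ) the codimension generating function satisfies the polynomial identity ∑_{w ∈ W} t^{codim fix(w)} = ∏_{p=1}^{n} (1 + (p·m − 1)·t) in ℤ[t]. -/

import Mathlib

noncomputable section

local notation "ℍ" => Quaternion ℝ

/-- The fixed subspace `fix(w) = ker(w − 1) = {x | w·x = x}` of a matrix acting on the
right ℍ-vector space `ℍⁿ` by left multiplication, as a right ℍ-subspace
(a submodule over `ℍᵐᵒᵖ`). -/
def fixSpace {n : ℕ} (w : Matrix (Fin n) (Fin n) ℍ) : Submodule ℍᵐᵒᵖ (Fin n → ℍ) where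
  carrier := {x | w.mulVec x = x}
  add_mem' := by
    intro a b ha hb
    simp only [Set.mem_setOf_eq] at *
    rw [Matrix.mulVec_add, ha, hb]
  zero_mem' := by simp [Set.mem_setOf_eq]
  smul_mem' := by
    intro c x hx
    simp only [Set.mem_setOf_eq] at *
    rw [Matrix.mulVec_smul, hx]

/-- `codim fix(w) = n − dim_ℍ fix(w)`. -/
def codimFix {n : ℕ} (w : Matrix (Fin n) (Fin n) ℍ) : ℕ :=
  n - Module.finrank ℍᵐᵒᵖ (fixSpace w)

/-- The permutation matrix of `σ`, acting on column vectors by `(P x) i = x (σ i)`. -/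
def permMat {n : ℕ} (σ : Equiv.Perm (Fin n)) : Matrix (Fin n) (Fin n) ℍ :=
  Matrix.of fun i j => if σ i = j then 1 else 0

/-- The quaternionic reflection group `W_n(Γ,Δ)`: the subgroup of `GL_n(ℍ)` generated by
the permutation matrices together with the diagonal matrices `diag(γ₁,…,γ_n)` with all
`γ i ∈ Γ` and `γ₁γ₂⋯γ_n ∈ Δ`. -/
def Wgrp (n : ℕ) (Γ Δ : Subgroup ℍˣ) : Subgroup (Matrix (Fin n) (Fin n) ℍ)ˣ :=
  Subgroup.closure
    {g | (∃ σ : Equiv.Perm (Fin n), g.val = permMat σ) ∨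
      (∃ γ : Fin n → ℍˣ, (∀ i, γ i ∈ Γ) ∧ (List.ofFn γ).prod ∈ Δ ∧
        g.val = Matrix.diagonal fun i => (γ i : ℍ))}

namespace WnAux
open Equiv Matrix

/-- monomial matrix -/
def monoMat {n : ℕ} (γ : Fin n → ℍ) (σ : Equiv.Perm (Fin n)) : Matrix (Fin n) (Fin n) ℍ :=
  Matrix.of fun i j => if σ i = j then γ i else 0

lemma monoMat_mulVec {n : ℕ} (γ : Fin n → ℍ) (σ : Equiv.Perm (Fin n)) (x : Fin n → ℍ)
    (i : Fin n) : (monoMat γ σ).mulVec x i = γ i * x (σ i) := by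
  simp [monoMat, Matrix.mulVec, dotProduct, ite_mul]

lemma mem_fixSpace_monoMat {n : ℕ} {γ : Fin n → ℍ} {σ : Equiv.Perm (Fin n)} {x : Fin n → ℍ} :
    x ∈ fixSpace (monoMat γ σ) ↔ ∀ i, γ i * x (σ i) = x i := by
  constructor
  · intro hx i
    have : (monoMat γ σ).mulVec x = x := hx
    rw [← monoMat_mulVec γ σ x i, this]
  · intro h
    show (monoMat γ σ).mulVec x = x
    funext i
    rw [monoMat_mulVec, h]

lemma monoMat_mul {n : ℕ} (γ δ : Fin n → ℍ) (σ τ : Equiv.Perm (Fin n)) :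
    monoMat γ σ * monoMat δ τ = monoMat (fun i => γ i * δ (σ i)) (τ * σ) := by
  apply Matrix.ext; intro i j
  rw [Matrix.mul_apply, Finset.sum_eq_single (σ i)]
  · simp [monoMat, Equiv.Perm.mul_apply, mul_ite]
    congr
  · intro b _ hb
    have : σ i ≠ b := Ne.symm hb
    simp [monoMat, this]
  · intro h; exact absurd (Finset.mem_univ _) h

lemma monoMat_one {n : ℕ} : monoMat (fun _ => (1:ℍ)) (1 : Equiv.Perm (Fin n)) = 1 := by
  apply Matrix.ext; intro i j
  simp [monoMat, Matrix.one_apply]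
  congr

/-- monomial matrix as a unit -/
def monoUnit {n : ℕ} (γ : Fin n → ℍˣ) (σ : Equiv.Perm (Fin n)) : (Matrix (Fin n) (Fin n) ℍ)ˣ where
  val := monoMat (fun i => (γ i : ℍ)) σ
  inv := monoMat (fun j => ((γ (σ⁻¹ j))⁻¹ : ℍˣ)) σ⁻¹
  val_inv := by
    rw [monoMat_mul]
    simpa using monoMat_one
  inv_val := by
    rw [monoMat_mul]
    simpa using monoMat_one

@[simp] lemma monoUnit_val {n : ℕ} (γ : Fin n → ℍˣ) (σ : Equiv.Perm (Fin n)) :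
    (monoUnit γ σ).val = monoMat (fun i => (γ i : ℍ)) σ := rfl

lemma monoMat_inj {n : ℕ} {γ δ : Fin n → ℍˣ} {σ τ : Equiv.Perm (Fin n)}
    (h : monoMat (fun i => (γ i : ℍ)) σ = monoMat (fun i => (δ i : ℍ)) τ) : γ = δ ∧ σ = τ := by
  have key : ∀ i, (γ i : ℍ) = δ i ∧ σ i = τ i := by
    intro i
    have h2 := congrFun (congrFun h i) (σ i)
    simp only [monoMat, Matrix.of_apply, if_pos rfl] at h2
    by_cases hτ : τ i = σ i
    · rw [if_pos hτ] at h2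
      exact ⟨h2, hτ.symm⟩
    · rw [if_neg hτ] at h2
      exact absurd h2 (Units.ne_zero _)
  constructor
  · funext i; exact Units.ext (key i).1
  · exact Equiv.ext fun i => (key i).2

variable {n : ℕ} (Γ : Subgroup ℍˣ)

/-- parametrization of `W_n(Γ,Γ)` -/
def φ (p : (Fin n → Γ) × Equiv.Perm (Fin n)) : (Matrix (Fin n) (Fin n) ℍ)ˣ :=
  monoUnit (fun i => (p.1 i : ℍˣ)) p.2

lemma φ_injective : Function.Injective (φ (n := n) Γ) := by
  intro p q h
  have h2 : (φ Γ p).val = (φ Γ q).val := congrArg Units.val h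
  obtain ⟨h3, h4⟩ := monoMat_inj h2
  obtain ⟨p1, p2⟩ := p
  obtain ⟨q1, q2⟩ := q
  simp only [Prod.mk.injEq]
  refine ⟨funext fun i => ?_, h4⟩
  have := congrFun h3 i
  exact Subtype.ext this

/-- the subgroup of monomial matrices with entries in Γ -/
def M : Subgroup (Matrix (Fin n) (Fin n) ℍ)ˣ where
  carrier := Set.range (φ Γ)
  one_mem' := ⟨(1, 1), by
    apply Units.ext
    simpa [φ] using monoMat_one⟩
  mul_mem' := by
    rintro _ _ ⟨⟨γ, σ⟩, rfl⟩ ⟨⟨δ, τ⟩, rfl⟩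
    refine ⟨⟨fun i => γ i * δ (σ i), τ * σ⟩, ?_⟩
    apply Units.ext
    simp [φ, monoMat_mul]
  inv_mem' := by
    rintro _ ⟨⟨γ, σ⟩, rfl⟩
    refine ⟨⟨fun j => (γ (σ⁻¹ j))⁻¹, σ⁻¹⟩, ?_⟩
    apply Units.ext
    show _ = ((φ Γ (γ, σ))⁻¹).val
    rfl

lemma permMat_eq (σ : Equiv.Perm (Fin n)) : permMat σ = monoMat (fun _ => (1:ℍ)) σ := rfl

lemma diagonal_eq (γ : Fin n → ℍ) : Matrix.diagonal γ = monoMat γ 1 := by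
  apply Matrix.ext; intro i j
  simp [monoMat, Matrix.diagonal_apply]
  congr

lemma Wgrp_eq : (Wgrp n Γ Γ : Set (Matrix (Fin n) (Fin n) ℍ)ˣ) = Set.range (φ Γ) := by
  have : Wgrp n Γ Γ = M Γ := by
    apply le_antisymm
    · apply Subgroup.closure_le (M Γ) |>.mpr
      rintro g (⟨σ, hσ⟩ | ⟨γ, hγ, -, hval⟩)
      · exact ⟨⟨1, σ⟩, Units.ext (by simpa [φ, permMat_eq] using hσ.symm)⟩
      · refine ⟨⟨fun i => ⟨γ i, hγ i⟩, 1⟩, Units.ext ?_⟩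
        simp only [φ, monoUnit_val]
        rw [hval, diagonal_eq]
    · rintro _ ⟨⟨γ, σ⟩, rfl⟩
      have hd : φ Γ (γ, 1) ∈ Wgrp n Γ Γ := by
        apply Subgroup.subset_closure
        right
        refine ⟨fun i => (γ i : ℍˣ), fun i => (γ i).2, ?_, ?_⟩
        · refine list_prod_mem fun x hx => ?_
          rw [List.mem_ofFn] at hx
          obtain ⟨i, rfl⟩ := hx
          exact (γ i).2
        · show monoMat _ 1 = _
          rw [← diagonal_eq]
      have hp : φ Γ (1, σ) ∈ Wgrp n Γ Γ := by
        apply Subgroup.subset_closure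
        left
        exact ⟨σ, by simp [φ, permMat_eq]⟩
      have : φ Γ (γ, σ) = φ Γ (γ, 1) * φ Γ (1, σ) := by
        apply Units.ext
        show _ = (monoMat _ 1) * (monoMat _ σ)
        rw [monoMat_mul]
        simp [φ]
      rw [this]
      exact mul_mem hd hp
  rw [this]; rfl

/-! ### finrank infrastructure -/

def opEquiv : ℍᵐᵒᵖ ≃ₗ[ℍᵐᵒᵖ] ℍ where
  toFun := MulOpposite.unop
  invFun := MulOpposite.op
  map_add' := fun _ _ => rfl
  map_smul' := fun _ _ => rfl
  left_inv := fun _ => rfl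
  right_inv := fun _ => rfl

instance : Module.Finite ℍᵐᵒᵖ ℍ := Module.Finite.equiv opEquiv

lemma finrank_H : Module.finrank ℍᵐᵒᵖ ℍ = 1 := by
  rw [← opEquiv.finrank_eq, Module.finrank_self]

lemma finrank_pi_H (k : ℕ) : Module.finrank ℍᵐᵒᵖ (Fin k → ℍ) = k := by
  rw [Module.finrank_pi_fintype]
  simp [finrank_H]

lemma finrank_fix_le {k : ℕ} (w : Matrix (Fin k) (Fin k) ℍ) :
    Module.finrank ℍᵐᵒᵖ (fixSpace w) ≤ k :=
  (Submodule.finrank_le _).trans_eq (finrank_pi_H k)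

lemma codimFix_eq {k : ℕ} (w : Matrix (Fin k) (Fin k) ℍ) :
    codimFix w = k - Module.finrank ℍᵐᵒᵖ (fixSpace w) := rfl

/-- the fixed space of left multiplication by `a` on `ℍ` -/
def Kspace (a : ℍ) : Submodule ℍᵐᵒᵖ ℍ where
  carrier := {x | a * x = x}
  add_mem' := by
    intro x y hx hy
    simp only [Set.mem_setOf_eq] at *
    rw [mul_add, hx, hy]
  zero_mem' := by simp
  smul_mem' := by
    intro c x hx
    simp only [Set.mem_setOf_eq] at *
    rw [MulOpposite.smul_eq_mul_unop, ← mul_assoc, hx]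

open scoped Classical in
lemma finrank_Kspace (a : ℍˣ) :
    Module.finrank ℍᵐᵒᵖ (Kspace (a : ℍ)) = if a = 1 then 1 else 0 := by
  split_ifs with h
  · subst h
    have : Kspace ((1 : ℍˣ) : ℍ) = ⊤ := by
      apply eq_top_iff.mpr
      intro x _
      show (1 : ℍ) * x = x
      rw [one_mul]
    rw [this, finrank_top, finrank_H]
  · have : Kspace (a : ℍ) = ⊥ := by
      apply eq_bot_iff.mpr
      intro x hx
      have hx' : (a : ℍ) * x = x := hx
      have h1 : ((a : ℍ) - 1) * x = 0 := by rw [sub_mul, one_mul, hx', sub_self]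
      have h2 : (a : ℍ) - 1 ≠ 0 := by
        intro hc
        exact h (Units.ext (by rwa [sub_eq_zero] at hc))
      have := mul_eq_zero.mp h1
      simp only [h2, false_or] at this
      simp [this]
    rw [this, finrank_bot]

/-! ### recursion lemmas for finrank of fixed spaces -/

lemma sigma0_zero {k : ℕ} (τ : Equiv.Perm (Fin k)) :
    (Equiv.Perm.decomposeFin.symm (0, τ)) 0 = 0 :=
  Equiv.Perm.decomposeFin_symm_apply_zero 0 τ

lemma sigma0_succ {k : ℕ} (τ : Equiv.Perm (Fin k)) (j : Fin k) :
    (Equiv.Perm.decomposeFin.symm (0, τ)) j.succ = (τ j).succ := by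
  rw [Equiv.Perm.decomposeFin_symm_apply_succ, Equiv.swap_self]
  rfl

open scoped Classical in
lemma finrank_fix_zero {k : ℕ} (γ : Fin (k+1) → ℍˣ) (τ : Equiv.Perm (Fin k)) :
    Module.finrank ℍᵐᵒᵖ
        (fixSpace (monoMat (fun i => (γ i : ℍ)) (Equiv.Perm.decomposeFin.symm (0, τ)))) =
      (if γ 0 = 1 then 1 else 0) +
        Module.finrank ℍᵐᵒᵖ (fixSpace (monoMat (fun j => (γ j.succ : ℍ)) τ)) := by
  classical
  set σ₀ := Equiv.Perm.decomposeFin.symm (0, τ) with hσ₀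
  have key : (fixSpace (monoMat (fun i => (γ i : ℍ)) σ₀)) ≃ₗ[ℍᵐᵒᵖ]
      (Kspace (γ 0 : ℍ) × fixSpace (monoMat (fun j => (γ j.succ : ℍ)) τ)) := by
    refine
      { toFun := fun x => (⟨x.1 0, ?_⟩, ⟨fun j => x.1 j.succ, ?_⟩)
        invFun := fun p => ⟨Fin.cons p.1.1 p.2.1, ?_⟩
        map_add' := fun x y => rfl
        map_smul' := fun c x => rfl
        left_inv := ?_
        right_inv := ?_ }
    · have hx := mem_fixSpace_monoMat.mp x.2 0
      rw [sigma0_zero] at hx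
      exact hx
    · refine mem_fixSpace_monoMat.mpr fun j => ?_
      have hx := mem_fixSpace_monoMat.mp x.2 j.succ
      rwa [sigma0_succ] at hx
    · refine mem_fixSpace_monoMat.mpr fun i => ?_
      refine Fin.cases ?_ (fun j => ?_) i
      · rw [sigma0_zero]
        simp only [Fin.cons_zero]
        exact p.1.2
      · rw [sigma0_succ]
        simpa using mem_fixSpace_monoMat.mp p.2.2 j
    · intro x
      apply Subtype.ext
      funext i
      refine Fin.cases ?_ (fun j => ?_) i <;> simp
    · intro p
      refine Prod.ext (Subtype.ext ?_) (Subtype.ext ?_)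
      · simp
      · funext j; simp
  rw [key.finrank_eq, Module.finrank_prod, finrank_Kspace]

lemma sigmas_zero {k : ℕ} (q : Fin k) (τ : Equiv.Perm (Fin k)) :
    (Equiv.Perm.decomposeFin.symm (q.succ, τ)) 0 = q.succ :=
  Equiv.Perm.decomposeFin_symm_apply_zero _ τ

lemma sigmas_succ {k : ℕ} (q : Fin k) (τ : Equiv.Perm (Fin k)) (j : Fin k) :
    (Equiv.Perm.decomposeFin.symm (q.succ, τ)) j.succ =
      if τ j = q then 0 else (τ j).succ := by
  rw [Equiv.Perm.decomposeFin_symm_apply_succ]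
  split_ifs with h
  · rw [h]; exact Equiv.swap_apply_right _ _
  · apply Equiv.swap_apply_of_ne_of_ne
    · exact Fin.succ_ne_zero _
    · exact fun hc => h (Fin.succ_injective _ hc)

lemma finrank_fix_succ {k : ℕ} (γ : Fin (k+1) → ℍˣ) (q : Fin k) (τ : Equiv.Perm (Fin k)) :
    Module.finrank ℍᵐᵒᵖ
        (fixSpace (monoMat (fun i => (γ i : ℍ)) (Equiv.Perm.decomposeFin.symm (q.succ, τ)))) =
      Module.finrank ℍᵐᵒᵖ
        (fixSpace (monoMat
          (fun j => ((γ j.succ : ℍ) * if τ j = q then (γ 0 : ℍ) else 1)) τ)) := by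
  classical
  set σ := Equiv.Perm.decomposeFin.symm (q.succ, τ) with hσ
  refine LinearEquiv.finrank_eq ?_
  refine
    { toFun := fun x => ⟨fun j => x.1 j.succ, ?_⟩
      invFun := fun y => ⟨Fin.cons ((γ 0 : ℍ) * y.1 q) y.1, ?_⟩
      map_add' := fun x y => rfl
      map_smul' := fun c x => rfl
      left_inv := ?_
      right_inv := ?_ }
  · refine mem_fixSpace_monoMat.mpr fun j => ?_
    have hx0 := mem_fixSpace_monoMat.mp x.2 0
    rw [sigmas_zero] at hx0
    have hxj := mem_fixSpace_monoMat.mp x.2 j.succ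
    rw [sigmas_succ] at hxj
    by_cases h : τ j = q
    · rw [if_pos h] at hxj ⊢
      rw [h, mul_assoc, hx0, hxj]
    · rw [if_neg h] at hxj ⊢
      rw [mul_one, hxj]
  · refine mem_fixSpace_monoMat.mpr fun i => ?_
    refine Fin.cases ?_ (fun j => ?_) i
    · rw [sigmas_zero]
      simp
    · rw [sigmas_succ]
      have hyj := mem_fixSpace_monoMat.mp y.2 j
      by_cases h : τ j = q
      · rw [if_pos h]
        rw [if_pos h] at hyj
        simp only [Fin.cons_succ, Fin.cons_zero]
        rw [← mul_assoc, hyj.symm, h]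
      · rw [if_neg h]
        rw [if_neg h, mul_one] at hyj
        simpa using hyj
  · intro x
    apply Subtype.ext
    funext i
    refine Fin.cases ?_ (fun j => ?_) i
    · have hx0 := mem_fixSpace_monoMat.mp x.2 0
      rw [sigmas_zero] at hx0
      simpa using hx0
    · simp
  · intro y
    apply Subtype.ext
    funext j
    simp

/-! ### codim recursions -/

open scoped Classical in
lemma codim_zero_case {k : ℕ} (γ : Fin (k+1) → ℍˣ) (τ : Equiv.Perm (Fin k)) :
    codimFix (monoMat (fun i => (γ i : ℍ)) (Equiv.Perm.decomposeFin.symm (0, τ))) =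
      codimFix (monoMat (fun j => (γ j.succ : ℍ)) τ) + (if γ 0 = 1 then 0 else 1) := by
  rw [codimFix_eq, codimFix_eq, finrank_fix_zero]
  have h := finrank_fix_le (monoMat (fun j => (γ j.succ : ℍ)) τ)
  split_ifs with h1 <;> omega

lemma codim_succ_case {k : ℕ} (γ : Fin (k+1) → ℍˣ) (q : Fin k) (τ : Equiv.Perm (Fin k)) :
    codimFix (monoMat (fun i => (γ i : ℍ)) (Equiv.Perm.decomposeFin.symm (q.succ, τ))) =
      codimFix (monoMat
        (fun j => ((γ j.succ : ℍ) * if τ j = q then (γ 0 : ℍ) else 1)) τ) + 1 := by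
  rw [codimFix_eq, codimFix_eq, finrank_fix_succ]
  have h := finrank_fix_le (monoMat
    (fun j => ((γ j.succ : ℍ) * if τ j = q then (γ 0 : ℍ) else 1)) τ)
  omega

/-! ### the generating function -/

open Polynomial

variable [Fintype Γ]

def T (k : ℕ) : ℤ[X] :=
  ∑ σ : Equiv.Perm (Fin k), ∑ γ : Fin k → Γ,
    (X : ℤ[X]) ^ codimFix (monoMat (fun i => ((γ i : ℍˣ) : ℍ)) σ)

open scoped Classical in
lemma sum_unit_factor {m : ℕ} (hm : Fintype.card Γ = m) :
    ∑ a : Γ, (X : ℤ[X]) ^ (if ((a : ℍˣ)) = 1 then 0 else 1)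
      = 1 + C ((m : ℤ) - 1) * X := by
  classical
  have hm1 : 1 ≤ m := hm ▸ Fintype.card_pos
  have key : ∀ a : Γ, (X : ℤ[X]) ^ (if ((a : ℍˣ)) = 1 then 0 else 1)
      = if a = 1 then 1 else X := by
    intro a
    simp only [OneMemClass.coe_eq_one]
    by_cases h : a = 1
    · simp [h]
    · simp [h]
  rw [Finset.sum_congr rfl (fun a _ => key a), Finset.sum_ite]
  simp only [Finset.sum_const]
  have hcard1 : (Finset.univ.filter (fun a : Γ => a = 1)).card = 1 := by
    rw [Finset.filter_eq']
    simp
  have hcard2 : (Finset.univ.filter (fun a : Γ => ¬ a = 1)).card = m - 1 := by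
    have := Finset.card_filter_add_card_filter_not
      (s := (Finset.univ : Finset Γ)) (p := fun a : Γ => a = 1)
    rw [Finset.card_univ, hm] at this
    omega
  rw [hcard1, hcard2, one_smul, nsmul_eq_mul]
  congr 1
  have h2 : ((m : ℤ) - 1) = ((m - 1 : ℕ) : ℤ) := by omega
  rw [h2, ← map_natCast (C : ℤ →+* ℤ[X])]

lemma sum_prod_mul {α β : Type*} [Fintype α] [Fintype β] (f : α → ℤ[X]) (g : β → ℤ[X]) :
    ∑ p : α × β, f p.1 * g p.2 = (∑ a : α, f a) * (∑ b : β, g b) := by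
  rw [Fintype.sum_prod_type]
  calc (∑ a : α, ∑ b : β, f (a, b).1 * g (a, b).2)
      = ∑ a : α, f a * ∑ b : β, g b := by
        apply Finset.sum_congr rfl
        intro a _
        show ∑ b : β, f a * g b = f a * ∑ b : β, g b
        exact (Finset.mul_sum _ _ _).symm
    _ = (∑ a : α, f a) * ∑ b : β, g b := (Finset.sum_mul _ _ _).symm

open scoped Classical in
lemma T_succ {m : ℕ} (hm : Fintype.card Γ = m) (k : ℕ) :
    T Γ (k+1) = (1 + C (((k:ℤ)+1) * (m:ℤ) - 1) * X) * T Γ k := by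
  have hT : T Γ (k+1) = ∑ σ : Equiv.Perm (Fin (k+1)), ∑ γ : Fin (k+1) → Γ,
      (X : ℤ[X]) ^ codimFix (monoMat (fun i => ((γ i : ℍˣ) : ℍ)) σ) := rfl
  rw [hT, ← Equiv.sum_comp (Equiv.Perm.decomposeFin.symm)
      (fun σ => ∑ γ : Fin (k+1) → Γ,
        (X : ℤ[X]) ^ codimFix (monoMat (fun i => ((γ i : ℍˣ) : ℍ)) σ)),
    Fintype.sum_prod_type, Fin.sum_univ_succ]
  have hzero : ∀ τ : Equiv.Perm (Fin k),
      (∑ γ : Fin (k+1) → Γ, (X : ℤ[X]) ^ codimFix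
          (monoMat (fun i => ((γ i : ℍˣ) : ℍ)) (Equiv.Perm.decomposeFin.symm (0, τ))))
        = (1 + C ((m:ℤ) - 1) * X) *
            ∑ δ : Fin k → Γ, (X : ℤ[X]) ^ codimFix (monoMat (fun j => ((δ j : ℍˣ) : ℍ)) τ) := by
    intro τ
    have step1 : ∀ γ : Fin (k+1) → Γ,
        (X : ℤ[X]) ^ codimFix
            (monoMat (fun i => ((γ i : ℍˣ) : ℍ)) (Equiv.Perm.decomposeFin.symm (0, τ)))
          = (X : ℤ[X]) ^ (if ((γ 0 : ℍˣ)) = 1 then 0 else 1) *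
              (X : ℤ[X]) ^ codimFix (monoMat (fun j => ((γ j.succ : ℍˣ) : ℍ)) τ) := by
      intro γ
      rw [codim_zero_case (fun i => (γ i : ℍˣ)) τ, pow_add, mul_comm]
    rw [Finset.sum_congr rfl (fun γ _ => step1 γ)]
    let e0 : (Fin (k+1) → Γ) ≃ (Γ × (Fin k → Γ)) :=
      { toFun := fun γ => (γ 0, fun j => γ j.succ)
        invFun := fun p => Fin.cons p.1 p.2
        left_inv := fun γ => funext fun i => Fin.cases (by simp) (fun j => by simp) i
        right_inv := fun p => Prod.ext (by simp) (funext fun j => by simp) }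
    have reindex : (∑ γ : Fin (k+1) → Γ,
        (X : ℤ[X]) ^ (if ((γ 0 : ℍˣ)) = 1 then 0 else 1) *
          (X : ℤ[X]) ^ codimFix (monoMat (fun j => ((γ j.succ : ℍˣ) : ℍ)) τ))
        = ∑ p : Γ × (Fin k → Γ),
            (X : ℤ[X]) ^ (if ((p.1 : ℍˣ)) = 1 then 0 else 1) *
              (X : ℤ[X]) ^ codimFix (monoMat (fun j => ((p.2 j : ℍˣ) : ℍ)) τ) :=
      Equiv.sum_comp e0 (fun p : Γ × (Fin k → Γ) =>
        (X : ℤ[X]) ^ (if ((p.1 : ℍˣ)) = 1 then 0 else 1) *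
          (X : ℤ[X]) ^ codimFix (monoMat (fun j => ((p.2 j : ℍˣ) : ℍ)) τ))
    rw [reindex,
      sum_prod_mul (fun a : Γ => (X : ℤ[X]) ^ (if ((a : ℍˣ)) = 1 then 0 else 1))
        (fun δ : Fin k → Γ => (X : ℤ[X]) ^ codimFix (monoMat (fun j => ((δ j : ℍˣ) : ℍ)) τ)),
      sum_unit_factor Γ hm]
  have hsucc : ∀ (q : Fin k) (τ : Equiv.Perm (Fin k)),
      (∑ γ : Fin (k+1) → Γ, (X : ℤ[X]) ^ codimFix
          (monoMat (fun i => ((γ i : ℍˣ) : ℍ)) (Equiv.Perm.decomposeFin.symm (q.succ, τ))))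
        = (m : ℤ[X]) * (X *
            ∑ δ : Fin k → Γ, (X : ℤ[X]) ^ codimFix (monoMat (fun j => ((δ j : ℍˣ) : ℍ)) τ)) := by
    intro q τ
    have step1 : ∀ γ : Fin (k+1) → Γ,
        (X : ℤ[X]) ^ codimFix
            (monoMat (fun i => ((γ i : ℍˣ) : ℍ)) (Equiv.Perm.decomposeFin.symm (q.succ, τ)))
          = X * (X : ℤ[X]) ^ codimFix
              (monoMat (fun j =>
                (((γ j.succ * if τ j = q then γ 0 else 1 : Γ) : ℍˣ) : ℍ)) τ) := by
      intro γ
      have harg : (fun j => (((γ j.succ * if τ j = q then γ 0 else 1 : Γ) : ℍˣ) : ℍ))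
          = fun j => (((γ j.succ : ℍˣ) : ℍ) * if τ j = q then ((γ 0 : ℍˣ) : ℍ) else 1) := by
        funext j
        by_cases h : τ j = q <;> simp [h]
      rw [harg, codim_succ_case (fun i => (γ i : ℍˣ)) q τ, pow_add, pow_one, mul_comm]
    rw [Finset.sum_congr rfl (fun γ _ => step1 γ)]
    let e3 : (Fin (k+1) → Γ) ≃ (Γ × (Fin k → Γ)) :=
      { toFun := fun γ => (γ 0, fun j => γ j.succ * if τ j = q then γ 0 else 1)
        invFun := fun p => Fin.cons p.1 (fun j => p.2 j * (if τ j = q then p.1 else 1)⁻¹)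
        left_inv := by
          intro γ
          funext i
          refine Fin.cases ?_ (fun j => ?_) i
          · simp
          · by_cases h : τ j = q <;> simp [h]
        right_inv := by
          intro p
          refine Prod.ext ?_ ?_
          · simp
          · funext j
            by_cases h : τ j = q <;> simp [h] }
    have reindex : (∑ γ : Fin (k+1) → Γ,
        X * (X : ℤ[X]) ^ codimFix
          (monoMat (fun j =>
            (((γ j.succ * if τ j = q then γ 0 else 1 : Γ) : ℍˣ) : ℍ)) τ))
        = ∑ p : Γ × (Fin k → Γ),
            X * (X : ℤ[X]) ^ codimFix (monoMat (fun j => ((p.2 j : ℍˣ) : ℍ)) τ) :=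
      Equiv.sum_comp e3 (fun p : Γ × (Fin k → Γ) =>
        X * (X : ℤ[X]) ^ codimFix (monoMat (fun j => ((p.2 j : ℍˣ) : ℍ)) τ))
    rw [reindex,
      sum_prod_mul (fun _ : Γ => (X : ℤ[X]))
        (fun δ : Fin k → Γ => (X : ℤ[X]) ^ codimFix (monoMat (fun j => ((δ j : ℍˣ) : ℍ)) τ)),
      Finset.sum_const, Finset.card_univ, hm, nsmul_eq_mul, mul_assoc]
  have hTk : T Γ k = ∑ τ : Equiv.Perm (Fin k),
      ∑ δ : Fin k → Γ, (X : ℤ[X]) ^ codimFix (monoMat (fun j => ((δ j : ℍˣ) : ℍ)) τ) := rfl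
  rw [Finset.sum_congr rfl (fun τ _ => hzero τ)]
  rw [Finset.sum_congr rfl (fun q _ => Finset.sum_congr rfl (fun τ _ => hsucc q τ))]
  have hleft : (∑ τ : Equiv.Perm (Fin k), (1 + C ((m:ℤ) - 1) * X) *
      ∑ δ : Fin k → Γ, (X : ℤ[X]) ^ codimFix (monoMat (fun j => ((δ j : ℍˣ) : ℍ)) τ))
      = (1 + C ((m:ℤ) - 1) * X) * T Γ k := by
    rw [← Finset.mul_sum, ← hTk]
  have hright : (∑ q : Fin k, ∑ τ : Equiv.Perm (Fin k),
      (m : ℤ[X]) * (X *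
        ∑ δ : Fin k → Γ, (X : ℤ[X]) ^ codimFix (monoMat (fun j => ((δ j : ℍˣ) : ℍ)) τ)))
      = (C ((k:ℤ) * (m:ℤ)) * X) * T Γ k := by
    rw [Finset.sum_const, Finset.card_univ, Fintype.card_fin, nsmul_eq_mul,
      ← Finset.mul_sum, ← Finset.mul_sum, ← hTk]
    have h1 : (k : ℤ[X]) = C (k : ℤ) := (map_natCast (C : ℤ →+* ℤ[X]) k).symm
    have h2 : (m : ℤ[X]) = C (m : ℤ) := (map_natCast (C : ℤ →+* ℤ[X]) m).symm
    rw [h1, h2, C_mul]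
    ring
  rw [hleft, hright, ← add_mul]
  congr 1
  rw [add_assoc, ← add_mul, ← C_add]
  congr 2
  ring

lemma T_zero : T Γ 0 = 1 := by
  have h0 : ∀ (σ : Equiv.Perm (Fin 0)) (γ : Fin 0 → Γ),
      codimFix (monoMat (fun i => ((γ i : ℍˣ) : ℍ)) σ) = 0 := fun σ γ => Nat.zero_sub _
  show (∑ σ : Equiv.Perm (Fin 0), ∑ γ : Fin 0 → Γ,
      (X : ℤ[X]) ^ codimFix (monoMat (fun i => ((γ i : ℍˣ) : ℍ)) σ)) = 1
  rw [Finset.sum_congr rfl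
    (fun σ _ => Finset.sum_congr rfl (fun γ _ => by rw [h0 σ γ, pow_zero]))]
  simp

lemma T_prod {m : ℕ} (hm : Fintype.card Γ = m) :
    ∀ k : ℕ, T Γ k = ∏ p ∈ Finset.Icc 1 k, (1 + C ((p : ℤ) * (m : ℤ) - 1) * X)
  | 0 => by
    rw [T_zero, Finset.Icc_eq_empty (by omega), Finset.prod_empty]
  | (k+1) => by
    rw [T_succ Γ hm k, T_prod hm k,
      Finset.prod_Icc_succ_top (Nat.le_add_left 1 k), mul_comm]
    congr 3

end WnAux

open Polynomial in
/-- For `W = W_n(Γ)` with `|Γ| = m`, the codimension generating function is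
`∑_{w ∈ W} t^{codim fix(w)} = ∏_{p=1}^{n} (1 + (p·m − 1)·t)` in `ℤ[t]`. -/
theorem codim_generating_function_Wn (n : ℕ) (hn : 1 ≤ n)
    (Γ : Subgroup ℍˣ) (hΓ : (Γ : Set ℍˣ).Finite) (m : ℕ) (hm : Nat.card Γ = m) :
    ∑ᶠ w ∈ (Wgrp n Γ Γ : Set (Matrix (Fin n) (Fin n) ℍ)ˣ),
        (X : ℤ[X]) ^ codimFix (w : (Matrix (Fin n) (Fin n) ℍ)ˣ).val =
      ∏ p ∈ Finset.Icc 1 n, (1 + C ((p : ℤ) * (m : ℤ) - 1) * X) := by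

  classical
  haveI : Finite Γ := hΓ.to_subtype
  haveI : Fintype Γ := Fintype.ofFinite Γ
  have hm' : Fintype.card Γ = m := by rw [← Nat.card_eq_fintype_card, hm]
  rw [WnAux.Wgrp_eq Γ, finsum_mem_range (WnAux.φ_injective Γ), finsum_eq_sum_of_fintype,
    Fintype.sum_prod_type, Finset.sum_comm]
  exact WnAux.T_prod Γ hm' n
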